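/- Let a, b, x, y, z be positive integers such that x and y are even and a·x + b·y = (a+b)·z. Then for every finite simple graph W with at least one vertex, t(P_x, W)^a · t(P_y, W)^b ≥ t(P_z, W)^{a+b}. -/

import Mathlib

/-- The homomorphism density `t(G, W)`. -/
noncomputable def homDensity {α β : Type} [Fintype α] [Fintype β]
    (G : SimpleGraph α) (W : SimpleGraph β) : ℝ :=
  (Nat.card (G →g W) : ℝ) / (Fintype.card β : ℝ) ^ (Fintype.card α)

/-- `P n` is the path with `n` edges (on `n + 1` vertices). -/
def pathN (n : ℕ) : SimpleGraph (Fin (n + 1)) := SimpleGraph.pathGraph (n + 1)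

open Matrix Finset SimpleGraph


variable {β : Type} [Fintype β] [DecidableEq β] (W : SimpleGraph β) [DecidableRel W.Adj]

noncomputable def Scount (n : ℕ) (v : β) : ℝ :=
  ∑ g : Fin (n + 1) → β, if g 0 = v then ∏ i : Fin n, W.adjMatrix ℝ (g i.castSucc) (g i.succ) else 0

lemma Scount_eq (n : ℕ) (v : β) : Scount W n v = ((W.adjMatrix ℝ ^ n) *ᵥ 1) v := by
  induction n generalizing v with
  | zero =>
    simp only [Scount, pow_zero, Matrix.one_mulVec, Pi.one_apply]
    rw [← Equiv.sum_comp (Equiv.funUnique (Fin 1) β).symm]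
    simp [Equiv.funUnique]
  | succ n ih =>
    have hcons : ∀ (x : β) (y : Fin (n + 1) → β),
        (∏ i : Fin (n + 1), W.adjMatrix ℝ ((Fin.cons x y : Fin (n+2) → β) i.castSucc) ((Fin.cons x y : Fin (n+2) → β) i.succ))
          = W.adjMatrix ℝ x (y 0) * ∏ i : Fin n, W.adjMatrix ℝ (y i.castSucc) (y i.succ) := by
      intro x y
      rw [Fin.prod_univ_succ]
      have h1 : ∀ i : Fin n, ((i.succ : Fin (n+1)).castSucc : Fin (n+2)) = (i.castSucc).succ :=
        fun i => (Fin.succ_castSucc i).symm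
      have h2 : ((0 : Fin (n+1)).succ : Fin (n+2)) = Fin.succ 0 := rfl
      simp [h1, h2, Fin.cons_succ]
    have key : Scount W (n + 1) v
        = ∑ g : Fin (n + 1) → β, W.adjMatrix ℝ v (g 0)
            * ∏ i : Fin n, W.adjMatrix ℝ (g i.castSucc) (g i.succ) := by
      unfold Scount
      rw [← Equiv.sum_comp (Fin.consEquiv (fun _ : Fin (n + 2) => β)), Fintype.sum_prod_type]
      simp only [Fin.consEquiv_apply, Fin.cons_zero, hcons]
      rw [Finset.sum_comm]
      rw [Finset.sum_congr rfl (fun g _ => Finset.sum_ite_eq' Finset.univ v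
        (fun x => W.adjMatrix ℝ x (g 0) * ∏ i : Fin n, W.adjMatrix ℝ (g i.castSucc) (g i.succ)))]
      simp
    have key2 : Scount W (n + 1) v = ∑ w, W.adjMatrix ℝ v w * Scount W n w := by
      rw [key]
      unfold Scount
      have hw : ∀ w : β, W.adjMatrix ℝ v w * (∑ g : Fin (n + 1) → β,
          if g 0 = w then ∏ i : Fin n, W.adjMatrix ℝ (g i.castSucc) (g i.succ) else 0)
          = ∑ g : Fin (n + 1) → β, if g 0 = w then
              W.adjMatrix ℝ v w * ∏ i : Fin n, W.adjMatrix ℝ (g i.castSucc) (g i.succ) else 0 := by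
        intro w
        rw [Finset.mul_sum]
        exact Finset.sum_congr rfl fun g _ => by split <;> simp
      simp only [hw]
      rw [Finset.sum_comm]
      refine Finset.sum_congr rfl fun g _ => ?_
      have := Finset.sum_ite_eq Finset.univ (g 0)
        (fun w => W.adjMatrix ℝ v w * ∏ i : Fin n, W.adjMatrix ℝ (g i.castSucc) (g i.succ))
      simp only [Finset.mem_univ, if_true] at this
      simpa using this
    rw [key2]
    simp only [ih]
    rw [pow_succ', ← Matrix.mulVec_mulVec]
    simp [Matrix.mulVec, dotProduct]

def homEquivFun (n : ℕ) : (pathN n →g W) ≃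
    {f : Fin (n + 1) → β // ∀ i : Fin n, W.Adj (f i.castSucc) (f i.succ)} where
  toFun φ := ⟨φ, fun i => φ.map_adj (by
    rw [pathN, pathGraph_adj]; left; simp)⟩
  invFun f := ⟨f.1, by
    intro u v huv
    rw [pathN, pathGraph_adj] at huv
    have hv := v.isLt
    have hu := u.isLt
    rcases huv with h | h
    · have hun : (u : ℕ) < n := by omega
      have hcast : (⟨(u : ℕ), hun⟩ : Fin n).castSucc = u := by ext; simp
      have hsucc : (⟨(u : ℕ), hun⟩ : Fin n).succ = v := by ext; simp [h]
      have := f.2 ⟨(u : ℕ), hun⟩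
      rwa [hcast, hsucc] at this
    · have hvn : (v : ℕ) < n := by omega
      have hcast : (⟨(v : ℕ), hvn⟩ : Fin n).castSucc = v := by ext; simp
      have hsucc : (⟨(v : ℕ), hvn⟩ : Fin n).succ = u := by ext; simp [h]
      have := f.2 ⟨(v : ℕ), hvn⟩
      rw [hcast, hsucc] at this
      exact this.symm⟩
  left_inv φ := rfl
  right_inv f := rfl

lemma card_hom_eq (n : ℕ) : (Nat.card (pathN n →g W) : ℝ)
    = (1 : β → ℝ) ⬝ᵥ ((W.adjMatrix ℝ ^ n) *ᵥ 1) := by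
  rw [Nat.card_congr (homEquivFun W n), Nat.card_eq_fintype_card, Fintype.card_subtype]
  have hterm : ∀ f : Fin (n + 1) → β,
      (∏ i : Fin n, W.adjMatrix ℝ (f i.castSucc) (f i.succ))
        = if (∀ i : Fin n, W.Adj (f i.castSucc) (f i.succ)) then (1:ℝ) else 0 := by
    intro f
    calc (∏ i : Fin n, W.adjMatrix ℝ (f i.castSucc) (f i.succ))
        = ∏ i : Fin n, if W.Adj (f i.castSucc) (f i.succ) then (1:ℝ) else 0 :=
          Finset.prod_congr rfl fun i _ => by simp [SimpleGraph.adjMatrix_apply]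
      _ = if (∀ i : Fin n, W.Adj (f i.castSucc) (f i.succ)) then (1:ℝ) else 0 := by
          rw [Finset.prod_boole]; simp
  have h1 : ((Finset.univ.filter
        (fun f : Fin (n + 1) → β => ∀ i : Fin n, W.Adj (f i.castSucc) (f i.succ))).card : ℝ)
      = ∑ f : Fin (n + 1) → β, ∏ i : Fin n, W.adjMatrix ℝ (f i.castSucc) (f i.succ) := by
    rw [← Finset.sum_boole]
    exact (Finset.sum_congr rfl fun f _ => (hterm f)).symm
  rw [h1]
  have h2 : ∀ f : Fin (n + 1) → β,
      (∏ i : Fin n, W.adjMatrix ℝ (f i.castSucc) (f i.succ))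
        = ∑ v : β, if f 0 = v then ∏ i : Fin n, W.adjMatrix ℝ (f i.castSucc) (f i.succ) else 0 := by
    intro f
    rw [Finset.sum_ite_eq Finset.univ (f 0)]
    simp
  calc ∑ f : Fin (n + 1) → β, ∏ i : Fin n, W.adjMatrix ℝ (f i.castSucc) (f i.succ)
      = ∑ f : Fin (n + 1) → β, ∑ v : β,
          if f 0 = v then ∏ i : Fin n, W.adjMatrix ℝ (f i.castSucc) (f i.succ) else 0 :=
        Finset.sum_congr rfl fun f _ => h2 f
    _ = ∑ v : β, Scount W n v := by rw [Finset.sum_comm]; rfl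
    _ = ∑ v : β, ((W.adjMatrix ℝ ^ n) *ᵥ 1) v := Finset.sum_congr rfl fun v _ => Scount_eq W n v
    _ = (1 : β → ℝ) ⬝ᵥ ((W.adjMatrix ℝ ^ n) *ᵥ 1) := by simp [dotProduct]

lemma adj_hermitian : (W.adjMatrix ℝ).IsHermitian := by
  rw [Matrix.IsHermitian]
  ext i j
  rw [Matrix.conjTranspose_apply, star_trivial]
  simp [SimpleGraph.adjMatrix_apply, SimpleGraph.adj_comm]

lemma exists_spectral : ∃ c lam : β → ℝ, (∀ i, 0 ≤ c i) ∧
    ∀ n, (Nat.card (pathN n →g W) : ℝ) = ∑ i, c i * lam i ^ n := by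
  set A := W.adjMatrix ℝ with hAdef
  have hA : A.IsHermitian := adj_hermitian W
  set U : Matrix β β ℝ := (hA.eigenvectorUnitary : Matrix β β ℝ) with hU
  have hUU : U * star U = 1 := Matrix.mem_unitaryGroup_iff.mp hA.eigenvectorUnitary.2
  have hUU' : star U * U = 1 := Matrix.mem_unitaryGroup_iff'.mp hA.eigenvectorUnitary.2
  have hspec : A = U * Matrix.diagonal hA.eigenvalues * star U := by
    have := hA.spectral_theorem
    rwa [RCLike.ofReal_real_eq_id, Function.id_comp] at this
  have hpowM : ∀ n : ℕ, (U * Matrix.diagonal hA.eigenvalues * star U) ^ n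
      = U * Matrix.diagonal (fun i => hA.eigenvalues i ^ n) * star U := by
    intro n
    induction n with
    | zero => simp [hUU]
    | succ n ih =>
      rw [pow_succ, ih]
      calc U * Matrix.diagonal (fun i => hA.eigenvalues i ^ n) * star U
            * (U * Matrix.diagonal hA.eigenvalues * star U)
          = U * Matrix.diagonal (fun i => hA.eigenvalues i ^ n) * (star U * U)
            * Matrix.diagonal hA.eigenvalues * star U := by
            simp only [Matrix.mul_assoc]
        _ = U * (Matrix.diagonal (fun i => hA.eigenvalues i ^ n)
            * Matrix.diagonal hA.eigenvalues) * star U := by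
            rw [hUU']; simp only [Matrix.mul_one, Matrix.mul_assoc]
        _ = U * Matrix.diagonal (fun i => hA.eigenvalues i ^ (n + 1)) * star U := by
            rw [Matrix.diagonal_mul_diagonal]
            have : (fun i => hA.eigenvalues i ^ n * hA.eigenvalues i)
                = fun i => hA.eigenvalues i ^ (n + 1) := by
              funext i; rw [pow_succ]
            rw [this]
  have hpow : ∀ n : ℕ, A ^ n = U * Matrix.diagonal (fun i => hA.eigenvalues i ^ n) * star U := by
    intro n
    conv_lhs => rw [hspec]
    exact hpowM n
  set cvec : β → ℝ := (star U) *ᵥ 1 with hcvec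
  refine ⟨fun i => cvec i ^ 2, hA.eigenvalues, fun i => sq_nonneg _, fun n => ?_⟩
  rw [card_hom_eq W n, ← hAdef, hpow n]
  have hvm : (1 : β → ℝ) ᵥ* U = cvec := by
    ext i
    simp [Matrix.vecMul, Matrix.mulVec, dotProduct, hcvec, Matrix.star_apply]
  rw [← Matrix.mulVec_mulVec, ← Matrix.mulVec_mulVec, Matrix.dotProduct_mulVec, hvm, ← hcvec]
  simp only [dotProduct, Matrix.mulVec_diagonal]
  exact Finset.sum_congr rfl fun i _ => by ring

lemma holder_key {ι : Type} [Fintype ι] (c lam : ι → ℝ) (hc : ∀ i, 0 ≤ c i)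
    (a b x y z : ℕ) (ha : 0 < a) (hb : 0 < b) (hz : 0 < z)
    (hxe : Even x) (hye : Even y) (hsum : a * x + b * y = (a + b) * z)
    {S : ℝ} (hS : 0 ≤ S) (hSz : S = ∑ i, c i * lam i ^ z) :
    S ^ (a + b) ≤ (∑ i, c i * lam i ^ x) ^ a * (∑ i, c i * lam i ^ y) ^ b := by
  have haR : (0:ℝ) < (a:ℝ) := by positivity
  have hbR : (0:ℝ) < (b:ℝ) := by positivity
  have habR : (0:ℝ) < (a:ℝ) + (b:ℝ) := by positivity
  set Tx : ℝ := ∑ i, c i * |lam i| ^ x with hTx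
  set Ty : ℝ := ∑ i, c i * |lam i| ^ y with hTy
  set Tz : ℝ := ∑ i, c i * |lam i| ^ z with hTz
  have hTx0 : 0 ≤ Tx := Finset.sum_nonneg fun i _ => by have := hc i; positivity
  have hTy0 : 0 ≤ Ty := Finset.sum_nonneg fun i _ => by have := hc i; positivity
  have hTxeq : Tx = ∑ i, c i * lam i ^ x :=
    Finset.sum_congr rfl fun i _ => by rw [hxe.pow_abs]
  have hTyeq : Ty = ∑ i, c i * lam i ^ y :=
    Finset.sum_congr rfl fun i _ => by rw [hye.pow_abs]
  have hSTz : S ≤ Tz := by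
    rw [hSz, hTz]
    refine Finset.sum_le_sum fun i _ => ?_
    refine mul_le_mul_of_nonneg_left ?_ (hc i)
    calc lam i ^ z ≤ |lam i ^ z| := le_abs_self _
      _ = |lam i| ^ z := abs_pow _ _
  -- Hölder's inequality
  have hpq : Real.HolderConjugate (((a:ℝ)+b)/a) (((a:ℝ)+b)/b) := by
    refine Real.holderConjugate_iff.mpr ⟨?_, ?_⟩
    · rw [lt_div_iff₀ haR]; linarith
    · rw [inv_div, inv_div]; field_simp
  have hzeq : (x:ℝ) * ((a:ℝ)/((a:ℝ)+b)) + (y:ℝ) * ((b:ℝ)/((a:ℝ)+b)) = (z:ℝ) := by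
    have : ((a:ℝ) * x + b * y) = ((a:ℝ)+b) * z := by exact_mod_cast hsum
    field_simp
    nlinarith [this]
  have key : Tz ≤ Tx ^ ((a:ℝ)/((a:ℝ)+b)) * Ty ^ ((b:ℝ)/((a:ℝ)+b)) := by
    have hf : ∀ i, (0:ℝ) ≤ (c i * |lam i| ^ x) ^ ((a:ℝ)/((a:ℝ)+b)) := fun i =>
      Real.rpow_nonneg (by have := hc i; positivity) _
    have hg : ∀ i, (0:ℝ) ≤ (c i * |lam i| ^ y) ^ ((b:ℝ)/((a:ℝ)+b)) := fun i =>
      Real.rpow_nonneg (by have := hc i; positivity) _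
    have H := Real.inner_le_Lp_mul_Lq_of_nonneg Finset.univ
      (f := fun i => (c i * |lam i| ^ x) ^ ((a:ℝ)/((a:ℝ)+b)))
      (g := fun i => (c i * |lam i| ^ y) ^ ((b:ℝ)/((a:ℝ)+b)))
      hpq (fun i _ => hf i) (fun i _ => hg i)
    have hfp : ∀ i, ((c i * |lam i| ^ x) ^ ((a:ℝ)/((a:ℝ)+b))) ^ (((a:ℝ)+b)/a)
        = c i * |lam i| ^ x := by
      intro i
      rw [← Real.rpow_natCast (|lam i|) x] at *
      rw [← Real.rpow_mul (by have := hc i; positivity)]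
      rw [div_mul_div_comm, mul_comm ((a:ℝ)) (((a:ℝ)+b)), div_self (by positivity),
        Real.rpow_one]
    have hgp : ∀ i, ((c i * |lam i| ^ y) ^ ((b:ℝ)/((a:ℝ)+b))) ^ (((a:ℝ)+b)/b)
        = c i * |lam i| ^ y := by
      intro i
      rw [← Real.rpow_natCast (|lam i|) y] at *
      rw [← Real.rpow_mul (by have := hc i; positivity)]
      rw [div_mul_div_comm, mul_comm ((b:ℝ)) (((a:ℝ)+b)), div_self (by positivity),
        Real.rpow_one]
    have hfg : ∀ i, ((c i * |lam i| ^ x) ^ ((a:ℝ)/((a:ℝ)+b)))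
        * ((c i * |lam i| ^ y) ^ ((b:ℝ)/((a:ℝ)+b))) = c i * |lam i| ^ z := by
      intro i
      rw [← Real.rpow_natCast (|lam i|) x, ← Real.rpow_natCast (|lam i|) y,
        ← Real.rpow_natCast (|lam i|) z]
      rw [Real.mul_rpow (hc i) (Real.rpow_nonneg (abs_nonneg _) _),
        Real.mul_rpow (hc i) (Real.rpow_nonneg (abs_nonneg _) _)]
      rw [← Real.rpow_mul (abs_nonneg _), ← Real.rpow_mul (abs_nonneg _)]
      have hcc : c i ^ ((a:ℝ)/((a:ℝ)+b)) * c i ^ ((b:ℝ)/((a:ℝ)+b)) = c i := by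
        rw [← Real.rpow_add' (hc i) (by rw [← add_div]; rw [div_self habR.ne']; norm_num)]
        rw [← add_div, div_self habR.ne', Real.rpow_one]
      have hll : |lam i| ^ ((x:ℝ) * ((a:ℝ)/((a:ℝ)+b))) * |lam i| ^ ((y:ℝ) * ((b:ℝ)/((a:ℝ)+b)))
          = |lam i| ^ (z:ℝ) := by
        rw [← Real.rpow_add' (abs_nonneg _) (by rw [hzeq]; exact_mod_cast hz.ne')]
        rw [hzeq]
      calc c i ^ ((a:ℝ)/((a:ℝ)+b)) * |lam i| ^ ((x:ℝ) * ((a:ℝ)/((a:ℝ)+b)))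
            * (c i ^ ((b:ℝ)/((a:ℝ)+b)) * |lam i| ^ ((y:ℝ) * ((b:ℝ)/((a:ℝ)+b))))
          = (c i ^ ((a:ℝ)/((a:ℝ)+b)) * c i ^ ((b:ℝ)/((a:ℝ)+b)))
            * (|lam i| ^ ((x:ℝ) * ((a:ℝ)/((a:ℝ)+b))) * |lam i| ^ ((y:ℝ) * ((b:ℝ)/((a:ℝ)+b)))) := by
            ring
        _ = c i * |lam i| ^ (z:ℝ) := by rw [hcc, hll]
    rw [Finset.sum_congr rfl (fun i _ => hfg i)] at H
    rw [Finset.sum_congr rfl (fun i _ => hfp i)] at H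
    rw [Finset.sum_congr rfl (fun i _ => hgp i)] at H
    have h1p : 1 / (((a:ℝ)+b)/a) = (a:ℝ)/((a:ℝ)+b) := by rw [one_div, inv_div]
    have h1q : 1 / (((a:ℝ)+b)/b) = (b:ℝ)/((a:ℝ)+b) := by rw [one_div, inv_div]
    rw [h1p, h1q] at H
    exact H
  -- raise to the (a+b) power
  have hTz0 : 0 ≤ Tz := le_trans hS hSTz
  calc S ^ (a + b) ≤ Tz ^ (a + b) := pow_le_pow_left₀ hS hSTz _
    _ ≤ (Tx ^ ((a:ℝ)/((a:ℝ)+b)) * Ty ^ ((b:ℝ)/((a:ℝ)+b))) ^ (a + b) :=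
        pow_le_pow_left₀ hTz0 key _
    _ = Tx ^ a * Ty ^ b := by
        rw [mul_pow, ← Real.rpow_natCast (Tx ^ ((a:ℝ)/((a:ℝ)+b))) (a+b),
          ← Real.rpow_natCast (Ty ^ ((b:ℝ)/((a:ℝ)+b))) (a+b),
          ← Real.rpow_mul hTx0, ← Real.rpow_mul hTy0]
        have e1 : (a:ℝ)/((a:ℝ)+b) * ((a+b : ℕ):ℝ) = (a:ℕ) := by push_cast; field_simp
        have e2 : (b:ℝ)/((a:ℝ)+b) * ((a+b : ℕ):ℝ) = (b:ℕ) := by push_cast; field_simp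
        rw [e1, e2, Real.rpow_natCast, Real.rpow_natCast]
    _ = (∑ i, c i * lam i ^ x) ^ a * (∑ i, c i * lam i ^ y) ^ b := by rw [hTxeq, hTyeq]

theorem stmt_7 (a b x y z : ℕ) (ha : 0 < a) (hb : 0 < b) (hx : 0 < x) (hy : 0 < y)
    (hz : 0 < z) (hxe : Even x) (hye : Even y) (hsum : a * x + b * y = (a + b) * z)
    (β : Type) [Fintype β] [Nonempty β] (W : SimpleGraph β) :
    homDensity (pathN x) W ^ a * homDensity (pathN y) W ^ b ≥
      homDensity (pathN z) W ^ (a + b) := by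
  classical
  obtain ⟨c, lam, hc, hw⟩ := exists_spectral W
  have key : ((Nat.card (pathN z →g W) : ℝ)) ^ (a + b)
      ≤ ((Nat.card (pathN x →g W) : ℝ)) ^ a * ((Nat.card (pathN y →g W) : ℝ)) ^ b := by
    rw [hw x, hw y]
    exact holder_key c lam hc a b x y z ha hb hz hxe hye hsum (Nat.cast_nonneg _) (hw z)
  have hD : (0:ℝ) < (Fintype.card β : ℝ) := by exact_mod_cast Fintype.card_pos
  rw [ge_iff_le, homDensity, homDensity, homDensity]
  simp only [Fintype.card_fin]
  rw [div_pow, div_pow, div_pow, div_mul_div_comm, ← pow_mul, ← pow_mul, ← pow_mul, ← pow_add]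
  have hexp : (x + 1) * a + (y + 1) * b = (z + 1) * (a + b) := by
    have h1 : (x + 1) * a + (y + 1) * b = (a * x + b * y) + (a + b) := by ring
    rw [h1, hsum]; ring
  rw [hexp]
  gcongr
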